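/- arXiv:1510.08512 — 5 statements merged into one kernel-verified Lean document; each statement's English description precedes it below -/
import Mathlib

section
/- Let p ≥ 1 and let Θ* be a symmetric positive definite p×p real matrix. For every symmetric p×p real matrix Δ such that Θ* + Δ is positive definite and ‖Δ‖_F ≤ 1, one has ⟨(Θ*)⁻¹ − (Θ* + Δ)⁻¹, Δ⟩ ≥ (‖Θ*‖_2 + 1)⁻² ‖Δ‖_F². (Lemma 1: restricted strong convexity of the Gaussian log-determinant loss.) -/
open Matrix

/-- Trace inner product ⟨U,V⟩ = tr(U Vᵀ). -/
noncomputable def traceInner {p : ℕ} (U V : Matrix (Fin p) (Fin p) ℝ) : ℝ :=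
  (U * Vᵀ).trace

/-- Frobenius norm. -/
noncomputable def frobNorm {p : ℕ} (U : Matrix (Fin p) (Fin p) ℝ) : ℝ :=
  Real.sqrt (∑ i, ∑ j, (U i j) ^ 2)

/-- Spectral norm (ℓ2 operator norm, i.e. the largest singular value). -/
noncomputable def specNorm {p : ℕ} (U : Matrix (Fin p) (Fin p) ℝ) : ℝ :=
  ‖(Matrix.toEuclideanCLM (𝕜 := ℝ) U : EuclideanSpace ℝ (Fin p) →L[ℝ] EuclideanSpace ℝ (Fin p))‖

namespace RscAux

variable {p : ℕ}

lemma psd_smul {M : Matrix (Fin p) (Fin p) ℝ} (hM : M.PosSemidef) {c : ℝ} (hc : 0 ≤ c) :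
    (c • M).PosSemidef := by
  refine .of_dotProduct_mulVec_nonneg ?_ fun x => ?_
  · unfold Matrix.IsHermitian
    rw [conjTranspose_smul, hM.1]
    simp
  · rw [smul_mulVec, dotProduct_smul]
    exact mul_nonneg hc (hM.dotProduct_mulVec_nonneg x)

lemma psd_trace_nonneg {M : Matrix (Fin p) (Fin p) ℝ} (hM : M.PosSemidef) :
    0 ≤ M.trace := by
  rw [Matrix.trace]
  refine Finset.sum_nonneg fun i _ => ?_
  have := hM.dotProduct_mulVec_nonneg (Pi.single i 1)
  simpa [dotProduct, mulVec, Pi.single_apply, Matrix.diag] using this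

open scoped MatrixOrder in
lemma psd_trace_mul_nonneg {P Q : Matrix (Fin p) (Fin p) ℝ}
    (hP : P.PosSemidef) (hQ : Q.PosSemidef) : 0 ≤ (P * Q).trace := by
  have hS : (CFC.sqrt P).PosSemidef := (CFC.sqrt_nonneg P).posSemidef
  have hSS : CFC.sqrt P * CFC.sqrt P = P := CFC.sqrt_mul_sqrt_self P hP.nonneg
  have h1 : ((CFC.sqrt P)ᴴ * Q * CFC.sqrt P).PosSemidef := hQ.conjTranspose_mul_mul_same (CFC.sqrt P)
  rw [hS.1] at h1
  have h2 : (CFC.sqrt P * Q * CFC.sqrt P).trace = (P * Q).trace := by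
    rw [Matrix.trace_mul_cycle, hSS]
  rw [← h2]
  exact psd_trace_nonneg h1

open scoped MatrixOrder in
lemma inv_psd_lower {M : Matrix (Fin p) (Fin p) ℝ} (hM : M.PosDef) {s : ℝ} (hs : 0 < s)
    (h : (s • (1 : Matrix (Fin p) (Fin p) ℝ) - M).PosSemidef) :
    (M⁻¹ - s⁻¹ • (1 : Matrix (Fin p) (Fin p) ℝ)).PosSemidef := by
  have hS : (CFC.sqrt M).PosSemidef := (CFC.sqrt_nonneg M).posSemidef
  have hSS : CFC.sqrt M * CFC.sqrt M = M := CFC.sqrt_mul_sqrt_self M hM.posSemidef.nonneg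
  set S := CFC.sqrt M with hSdef
  have h1 : (s • M - M * M).PosSemidef := by
    have h2 := h.conjTranspose_mul_mul_same S
    have e : Sᴴ * (s • (1 : Matrix (Fin p) (Fin p) ℝ) - M) * S = s • M - M * M := by
      rw [hS.1, ← hSS]
      noncomm_ring
    rwa [e] at h2
  have hdet : IsUnit M.det := (Matrix.isUnit_iff_isUnit_det M).mp hM.isUnit
  have hMM : M * M⁻¹ = 1 := Matrix.mul_nonsing_inv M hdet
  have hMM' : M⁻¹ * M = 1 := Matrix.nonsing_inv_mul M hdet
  have h3 := h1.conjTranspose_mul_mul_same M⁻¹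
  have hMinv : (M⁻¹)ᴴ = M⁻¹ := hM.isHermitian.inv
  have e2 : (M⁻¹)ᴴ * (s • M - M * M) * M⁻¹ = s • M⁻¹ - 1 := by
    rw [hMinv, Matrix.mul_sub, Matrix.sub_mul, Matrix.mul_smul, Matrix.smul_mul, hMM',
      Matrix.one_mul, ← Matrix.mul_assoc M⁻¹ M M, hMM', Matrix.one_mul, hMM]
  rw [e2] at h3
  have e3 : M⁻¹ - s⁻¹ • (1 : Matrix (Fin p) (Fin p) ℝ) = s⁻¹ • (s • M⁻¹ - 1) := by
    rw [smul_sub, smul_smul, inv_mul_cancel₀ hs.ne', one_smul]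
  rw [e3]
  exact psd_smul h3 (inv_nonneg.mpr hs.le)

lemma quad_le_spec (M : Matrix (Fin p) (Fin p) ℝ) (x : Fin p → ℝ) :
    x ⬝ᵥ (M *ᵥ x) ≤ specNorm M * (x ⬝ᵥ x) := by
  set T := (Matrix.toEuclideanCLM (𝕜 := ℝ) M :
    EuclideanSpace ℝ (Fin p) →L[ℝ] EuclideanSpace ℝ (Fin p)) with hT
  set x' : EuclideanSpace ℝ (Fin p) := WithLp.toLp 2 x with hx'
  have hTx : WithLp.equiv 2 (Fin p → ℝ) (T x') = M *ᵥ x := by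
    rw [hx']
    rfl
  have h1 : x ⬝ᵥ (M *ᵥ x) = inner ℝ x' (T x') := by
    rw [PiLp.inner_apply]
    simp only [RCLike.inner_apply, starRingEnd_apply, star_trivial]
    rw [← hTx]
    exact Finset.sum_congr rfl fun i _ => mul_comm _ _
  have h2 : (x ⬝ᵥ x : ℝ) = ‖x'‖ ^ 2 := by
    rw [← real_inner_self_eq_norm_sq, PiLp.inner_apply]
    simp only [RCLike.inner_apply, starRingEnd_apply, star_trivial]
    rfl
  rw [h1, h2]
  calc (inner ℝ x' (T x') : ℝ) ≤ ‖x'‖ * ‖T x'‖ := real_inner_le_norm _ _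
    _ ≤ ‖x'‖ * (‖T‖ * ‖x'‖) := by
        exact mul_le_mul_of_nonneg_left (T.le_opNorm x') (norm_nonneg _)
    _ = ‖T‖ * ‖x'‖ ^ 2 := by ring
    _ = specNorm M * ‖x'‖ ^ 2 := rfl

lemma quad_le_frob (M : Matrix (Fin p) (Fin p) ℝ) (x : Fin p → ℝ) :
    x ⬝ᵥ (M *ᵥ x) ≤ frobNorm M * (x ⬝ᵥ x) := by
  have hxx : (x ⬝ᵥ x : ℝ) = ∑ i, x i ^ 2 := by
    simp [dotProduct, pow_two]
  have key : (x ⬝ᵥ (M *ᵥ x)) ^ 2 ≤ (∑ i, ∑ j, (M i j) ^ 2) * (∑ i, x i ^ 2) ^ 2 := by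
    have h1 : x ⬝ᵥ (M *ᵥ x) = ∑ ij : Fin p × Fin p, M ij.1 ij.2 * (x ij.1 * x ij.2) := by
      rw [Fintype.sum_prod_type]
      simp [dotProduct, mulVec, Finset.mul_sum]
      congr 1; ext i; congr 1; ext j; ring
    have h2 := Finset.sum_mul_sq_le_sq_mul_sq Finset.univ
      (fun ij : Fin p × Fin p => M ij.1 ij.2) (fun ij : Fin p × Fin p => x ij.1 * x ij.2)
    rw [h1]
    calc (∑ ij : Fin p × Fin p, M ij.1 ij.2 * (x ij.1 * x ij.2)) ^ 2
        ≤ (∑ ij : Fin p × Fin p, (M ij.1 ij.2) ^ 2) *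
          (∑ ij : Fin p × Fin p, (x ij.1 * x ij.2) ^ 2) := h2
      _ = (∑ i, ∑ j, (M i j) ^ 2) * (∑ i, x i ^ 2) ^ 2 := by
          rw [Fintype.sum_prod_type, Fintype.sum_prod_type]
          congr 1
          rw [pow_two, Finset.sum_mul_sum]
          congr 1; ext i
          simp [mul_pow]
  have hMnn : (0:ℝ) ≤ ∑ i, ∑ j, (M i j) ^ 2 :=
    Finset.sum_nonneg fun i _ => Finset.sum_nonneg fun j _ => sq_nonneg _
  have hfrob : frobNorm M ^ 2 = ∑ i, ∑ j, (M i j) ^ 2 := Real.sq_sqrt hMnn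
  have hxnn : (0:ℝ) ≤ ∑ i, x i ^ 2 := Finset.sum_nonneg fun i _ => sq_nonneg _
  have hfn : 0 ≤ frobNorm M := Real.sqrt_nonneg _
  rw [hxx]
  have hb : 0 ≤ frobNorm M * ∑ i, x i ^ 2 := mul_nonneg hfn hxnn
  nlinarith [key, hb, hfrob]

lemma shift_psd {M : Matrix (Fin p) (Fin p) ℝ} (hM : M.IsHermitian) {c : ℝ}
    (h : ∀ x : Fin p → ℝ, x ⬝ᵥ (M *ᵥ x) ≤ c * (x ⬝ᵥ x)) :
    (c • (1 : Matrix (Fin p) (Fin p) ℝ) - M).PosSemidef := by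
  refine .of_dotProduct_mulVec_nonneg ?_ fun x => ?_
  · unfold Matrix.IsHermitian
    rw [conjTranspose_sub, conjTranspose_smul, conjTranspose_one, hM]
    simp
  · have hx := h x
    simp only [star_trivial, sub_mulVec, dotProduct_sub, smul_mulVec, one_mulVec,
      dotProduct_smul]
    rw [sub_nonneg]
    simpa [smul_eq_mul] using hx

end RscAux

open RscAux in
/-- Lemma 1: restricted strong convexity of the Gaussian log-determinant loss. -/
theorem rsc_log_det (p : ℕ) (hp : 1 ≤ p)
    (Θ : Matrix (Fin p) (Fin p) ℝ) (hΘ : Θ.PosDef)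
    (Δ : Matrix (Fin p) (Fin p) ℝ) (hΔ : Δ.IsSymm)
    (hpd : (Θ + Δ).PosDef) (hF : frobNorm Δ ≤ 1) :
    traceInner (Θ⁻¹ - (Θ + Δ)⁻¹) Δ ≥ ((specNorm Θ + 1) ^ 2)⁻¹ * (frobNorm Δ) ^ 2 := by
  set s : ℝ := specNorm Θ + 1 with hs_def
  have hspec_nn : 0 ≤ specNorm Θ := norm_nonneg _
  have hs : (0:ℝ) < s := by positivity
  have hΔH : Δᴴ = Δ := by
    rw [show Δᴴ = Δᵀ from rfl]
    exact hΔ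
  -- PSD of s•1 - Θ and s•1 - (Θ+Δ)
  have hΘup : (s • (1 : Matrix (Fin p) (Fin p) ℝ) - Θ).PosSemidef := by
    refine shift_psd hΘ.isHermitian fun x => ?_
    have h1 := quad_le_spec Θ x
    have h2 : (0:ℝ) ≤ x ⬝ᵥ x := by
      simp only [dotProduct]
      exact Finset.sum_nonneg fun i _ => mul_self_nonneg _
    nlinarith
  have hΘΔup : (s • (1 : Matrix (Fin p) (Fin p) ℝ) - (Θ + Δ)).PosSemidef := by
    refine shift_psd hpd.isHermitian fun x => ?_
    have h1 := quad_le_spec Θ x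
    have h2 := quad_le_frob Δ x
    have h3 : (0:ℝ) ≤ x ⬝ᵥ x := by
      simp only [dotProduct]
      exact Finset.sum_nonneg fun i _ => mul_self_nonneg _
    have h4 : x ⬝ᵥ ((Θ + Δ) *ᵥ x) = x ⬝ᵥ (Θ *ᵥ x) + x ⬝ᵥ (Δ *ᵥ x) := by
      rw [add_mulVec, dotProduct_add]
    nlinarith [mul_le_mul_of_nonneg_right hF h3]
  -- lower bounds for inverses
  have hAlow := inv_psd_lower hΘ hs hΘup
  have hBlow := inv_psd_lower hpd hs hΘΔup
  set A := Θ⁻¹ with hA_def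
  set B := (Θ + Δ)⁻¹ with hB_def
  have hBpsd : B.PosSemidef := hpd.inv.posSemidef
  -- matrix identity
  have hdet1 : IsUnit Θ.det := (Matrix.isUnit_iff_isUnit_det Θ).mp hΘ.isUnit
  have hdet2 : IsUnit (Θ + Δ).det := (Matrix.isUnit_iff_isUnit_det _).mp hpd.isUnit
  have hid : Θ⁻¹ - (Θ + Δ)⁻¹ = A * Δ * B := by
    have : A * Δ * B = A * ((Θ + Δ) - Θ) * B := by rw [add_sub_cancel_left]
    rw [this, Matrix.mul_sub, Matrix.sub_mul, Matrix.mul_assoc A (Θ + Δ) B,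
      Matrix.mul_nonsing_inv _ hdet2, Matrix.mul_one, hA_def,
      Matrix.nonsing_inv_mul _ hdet1, Matrix.one_mul]
  -- trace computations
  have hFF : (Δ * Δ).trace = frobNorm Δ ^ 2 := by
    have hMnn : (0:ℝ) ≤ ∑ i, ∑ j, (Δ i j) ^ 2 :=
      Finset.sum_nonneg fun i _ => Finset.sum_nonneg fun j _ => sq_nonneg _
    rw [frobNorm, Real.sq_sqrt hMnn, Matrix.trace]
    refine Finset.sum_congr rfl fun i _ => ?_
    rw [Matrix.diag_apply, Matrix.mul_apply]
    refine Finset.sum_congr rfl fun j _ => ?_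
    have : Δ j i = Δ i j := hΔ.apply i j
    rw [this, pow_two]
  have hFFnn : 0 ≤ (Δ * Δ).trace := by rw [hFF]; positivity
  -- PSD matrices for trace bounds
  have hΔBΔ : (Δ * B * Δ).PosSemidef := by
    have := hBpsd.conjTranspose_mul_mul_same Δ
    rwa [hΔH] at this
  have hΔΔ : (Δ * Δ).PosSemidef := by
    have := Matrix.posSemidef_conjTranspose_mul_self Δ
    rwa [hΔH] at this
  -- step 1 : tr(A Δ B Δ) ≥ s⁻¹ tr(Δ B Δ)
  have step1 : s⁻¹ * (Δ * B * Δ).trace ≤ ((A * Δ * B) * Δ).trace := by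
    have h0 := psd_trace_mul_nonneg hAlow hΔBΔ
    have e : (A - s⁻¹ • (1 : Matrix (Fin p) (Fin p) ℝ)) * (Δ * B * Δ)
        = (A * Δ * B) * Δ - s⁻¹ • (Δ * B * Δ) := by
      rw [Matrix.sub_mul, Matrix.smul_mul, Matrix.one_mul]
      noncomm_ring
    rw [e, Matrix.trace_sub, Matrix.trace_smul, sub_nonneg] at h0
    simpa [smul_eq_mul] using h0
  -- step 2 : tr(Δ B Δ) ≥ s⁻¹ tr(Δ Δ)
  have step2 : s⁻¹ * (Δ * Δ).trace ≤ (Δ * B * Δ).trace := by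
    have h0 := psd_trace_mul_nonneg hBlow hΔΔ
    have e : (B - s⁻¹ • (1 : Matrix (Fin p) (Fin p) ℝ)) * (Δ * Δ)
        = B * (Δ * Δ) - s⁻¹ • (Δ * Δ) := by
      rw [Matrix.sub_mul, Matrix.smul_mul, Matrix.one_mul]
    rw [e, Matrix.trace_sub, Matrix.trace_smul, sub_nonneg] at h0
    have ecyc : (B * (Δ * Δ)).trace = (Δ * B * Δ).trace := by
      rw [Matrix.trace_mul_cycle Δ B Δ]
      exact Matrix.trace_mul_comm B (Δ * Δ)
    rw [ecyc] at h0
    simpa [smul_eq_mul] using h0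
  -- assemble
  have hLHS : traceInner (Θ⁻¹ - (Θ + Δ)⁻¹) Δ = ((A * Δ * B) * Δ).trace := by
    rw [traceInner, hid]
    congr 1
    rw [show Δᵀ = Δ from hΔ]
  rw [hLHS, ge_iff_le]
  have hsinv : (0:ℝ) ≤ s⁻¹ := inv_nonneg.mpr hs.le
  calc (s ^ 2)⁻¹ * (frobNorm Δ) ^ 2
      = s⁻¹ * (s⁻¹ * (Δ * Δ).trace) := by
        rw [hFF, pow_two, mul_inv, mul_assoc]
    _ ≤ s⁻¹ * (Δ * B * Δ).trace := mul_le_mul_of_nonneg_left step2 hsinv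
    _ ≤ ((A * Δ * B) * Δ).trace := step1
end

section
/- Let p ≥ 1, let Θ* be a symmetric positive definite p×p real matrix, and let Δ be a symmetric p×p real matrix such that Θ* + Δ is positive definite and ‖Δ‖_F ≥ 1. Then ⟨(Θ*)⁻¹ − (Θ* + Δ)⁻¹, Δ⟩ ≥ (‖Θ*‖_2 + 1)⁻² ‖Δ‖_F. (Linear-rate restricted strong convexity outside the unit Frobenius ball, obtained by the rescaling argument in the proof of Lemma 2.) -/
open Matrix

open scoped RealInnerProductSpace

section Aux

variable {p : ℕ}

lemma psd_quad_nonneg {M : Matrix (Fin p) (Fin p) ℝ} (hM : M.PosSemidef)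
    (x : Fin p → ℝ) : 0 ≤ x ⬝ᵥ (M *ᵥ x) := by
  simpa using hM.dotProduct_mulVec_nonneg x

lemma psd_trace_nonneg' {M : Matrix (Fin p) (Fin p) ℝ} (hM : M.PosSemidef) :
    0 ≤ M.trace := by
  rw [Matrix.trace]
  refine Finset.sum_nonneg fun i _ => ?_
  have h := psd_quad_nonneg hM (Pi.single i 1)
  simpa [Matrix.mulVec_single, single_dotProduct, Matrix.diag] using h

lemma trace_mul_psd_nonneg {A B : Matrix (Fin p) (Fin p) ℝ}
    (hA : A.PosSemidef) (hB : B.PosSemidef) : 0 ≤ (A * B).trace := by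
  obtain ⟨m, v, rfl⟩ := Matrix.posSemidef_iff_eq_sum_vecMulVec.mp hB
  rw [Matrix.mul_sum, Matrix.trace_sum]
  refine Finset.sum_nonneg fun i _ => ?_
  have h1 : (A * vecMulVec (v i) (star (v i))).trace = v i ⬝ᵥ (A *ᵥ v i) := by
    simp only [Matrix.trace, Matrix.diag, Matrix.mul_apply, vecMulVec_apply, dotProduct,
      Matrix.mulVec, Finset.mul_sum, star_trivial]
    refine Finset.sum_congr rfl fun j _ => Finset.sum_congr rfl fun k _ => by ring
  rw [h1]
  exact psd_quad_nonneg hA (v i)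

lemma quad_discrim {a b c : ℝ} (ha : 0 ≤ a)
    (h : ∀ t : ℝ, 0 ≤ c + 2 * t * b + t ^ 2 * a) : b ^ 2 ≤ a * c := by
  rcases eq_or_lt_of_le ha with ha0 | ha0
  · by_contra hb
    have hb2 : 0 < b ^ 2 := by nlinarith [h 0]
    have hbne : b ≠ 0 := by intro h0; rw [h0] at hb2; simp at hb2
    have ht := h (-(c + 1) / (2 * b))
    have : 2 * (-(c + 1) / (2 * b)) * b = -(c + 1) := by field_simp
    rw [← ha0] at ht
    nlinarith [ht, this]
  · have ht := h (-b / a)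
    have h1 : 2 * (-b / a) * b = -(2 * b ^ 2) / a := by ring
    have h2 : (-b / a) ^ 2 * a = b ^ 2 / a := by field_simp
    rw [h1, h2] at ht
    have := mul_nonneg ht ha0.le
    have hane : a ≠ 0 := ha0.ne'
    field_simp at this
    nlinarith [this]

lemma psd_cauchy {M : Matrix (Fin p) (Fin p) ℝ} (hM : M.PosSemidef)
    (x y : Fin p → ℝ) :
    (x ⬝ᵥ (M *ᵥ y)) ^ 2 ≤ (x ⬝ᵥ (M *ᵥ x)) * (y ⬝ᵥ (M *ᵥ y)) := by
  have hsym : ∀ u v : Fin p → ℝ, u ⬝ᵥ (M *ᵥ v) = v ⬝ᵥ (M *ᵥ u) := by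
    intro u v
    rw [Matrix.dotProduct_mulVec, dotProduct_comm, ← Matrix.mulVec_transpose]
    have : Mᵀ = M := by
      have := hM.isHermitian
      rwa [Matrix.IsHermitian, Matrix.conjTranspose_eq_transpose_of_trivial] at this
    rw [this]
  have key : ∀ t : ℝ, 0 ≤ (x ⬝ᵥ (M *ᵥ x)) + 2 * t * (x ⬝ᵥ (M *ᵥ y))
      + t ^ 2 * (y ⬝ᵥ (M *ᵥ y)) := by
    intro t
    have h := psd_quad_nonneg hM (x + t • y)
    have hexp : (x + t • y) ⬝ᵥ (M *ᵥ (x + t • y))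
        = (x ⬝ᵥ (M *ᵥ x)) + 2 * t * (x ⬝ᵥ (M *ᵥ y)) + t ^ 2 * (y ⬝ᵥ (M *ᵥ y)) := by
      simp only [Matrix.mulVec_add, Matrix.mulVec_smul, add_dotProduct,
        smul_dotProduct, dotProduct_add, dotProduct_smul, smul_eq_mul]
      rw [hsym y x]
      ring
    rw [hexp] at h
    exact h
  have := quad_discrim (psd_quad_nonneg hM y) key
  nlinarith [this]

lemma dot_self_nonneg (x : Fin p → ℝ) : 0 ≤ x ⬝ᵥ x :=
  Finset.sum_nonneg fun i _ => mul_self_nonneg _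

lemma dot_self_eq_zero {x : Fin p → ℝ} (h : x ⬝ᵥ x = 0) : x = 0 := by
  funext i
  have h2 : ∀ j ∈ Finset.univ, 0 ≤ x j * x j := fun j _ => mul_self_nonneg _
  have := (Finset.sum_eq_zero_iff_of_nonneg h2).mp h i (Finset.mem_univ i)
  show x i = 0
  nlinarith [this]

/-- If `M` is positive definite with quadratic form bounded by `t`, then
`M⁻¹ - t⁻¹ • 1` is PSD. -/
lemma inv_quad_lower {M : Matrix (Fin p) (Fin p) ℝ} (hM : M.PosDef) {t : ℝ} (ht : 0 < t)
    (hb : ∀ x, x ⬝ᵥ (M *ᵥ x) ≤ t * (x ⬝ᵥ x)) :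
    (M⁻¹ - t⁻¹ • (1 : Matrix (Fin p) (Fin p) ℝ)).PosSemidef := by
  have hMinv : M⁻¹.PosDef := hM.inv
  have hdet : IsUnit M.det := isUnit_iff_ne_zero.mpr hM.det_pos.ne'
  refine Matrix.PosSemidef.of_dotProduct_mulVec_nonneg ?_ ?_
  · refine hMinv.1.sub ?_
    simp [Matrix.IsHermitian, Matrix.conjTranspose_smul]
  · intro x
    have hgoal : t⁻¹ * (x ⬝ᵥ x) ≤ x ⬝ᵥ (M⁻¹ *ᵥ x) := by
      set y := M⁻¹ *ᵥ x with hy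
      have hMy : M *ᵥ y = x := by
        rw [hy, Matrix.mulVec_mulVec, Matrix.mul_nonsing_inv _ hdet, Matrix.one_mulVec]
      have hxy : x ⬝ᵥ (M *ᵥ y) = x ⬝ᵥ x := by rw [hMy]
      have hyy : y ⬝ᵥ (M *ᵥ y) = x ⬝ᵥ (M⁻¹ *ᵥ x) := by
        rw [hMy, dotProduct_comm]
      have hcs := psd_cauchy hM.posSemidef x y
      rw [hxy, hyy] at hcs
      have hbx := hb x
      rcases eq_or_lt_of_le (dot_self_nonneg x) with h0 | h0
      · have hx0 : x = 0 := dot_self_eq_zero h0.symm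
        simp [hx0]
      · have hinvq : 0 ≤ x ⬝ᵥ (M⁻¹ *ᵥ x) := psd_quad_nonneg hMinv.posSemidef x
        rw [inv_mul_le_iff₀ ht]
        nlinarith [hcs, hbx, h0, hinvq]
    have : x ⬝ᵥ ((M⁻¹ - t⁻¹ • (1 : Matrix (Fin p) (Fin p) ℝ)) *ᵥ x)
        = x ⬝ᵥ (M⁻¹ *ᵥ x) - t⁻¹ * (x ⬝ᵥ x) := by
      rw [Matrix.sub_mulVec, dotProduct_sub, Matrix.smul_mulVec,
        Matrix.one_mulVec, dotProduct_smul, smul_eq_mul]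
    simpa [this] using sub_nonneg.mpr hgoal

lemma quad_le_spec (M : Matrix (Fin p) (Fin p) ℝ) (x : Fin p → ℝ) :
    x ⬝ᵥ (M *ᵥ x) ≤ specNorm M * (x ⬝ᵥ x) := by
  set T := (Matrix.toEuclideanCLM (𝕜 := ℝ) M :
    EuclideanSpace ℝ (Fin p) →L[ℝ] EuclideanSpace ℝ (Fin p)) with hT
  set x' : EuclideanSpace ℝ (Fin p) := (WithLp.equiv 2 (Fin p → ℝ)).symm x with hx'
  have hTx : T x' = (WithLp.equiv 2 (Fin p → ℝ)).symm (M *ᵥ x) := by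
    rw [hT, hx', WithLp.equiv_symm_apply, Matrix.toEuclideanCLM_toLp]
  have h3 : ⟪x', T x'⟫ = x ⬝ᵥ (M *ᵥ x) := by
    rw [hTx]
    simp [PiLp.inner_apply, dotProduct, hx', mul_comm]
  have h4 : ‖x'‖ * ‖x'‖ = x ⬝ᵥ x := by
    rw [← real_inner_self_eq_norm_mul_norm, hx', WithLp.equiv_symm_apply, PiLp.inner_apply]
    simp [dotProduct, sq]
  have h1 : ⟪x', T x'⟫ ≤ ‖x'‖ * ‖T x'‖ := real_inner_le_norm _ _
  have h2 : ‖T x'‖ ≤ ‖T‖ * ‖x'‖ := T.le_opNorm x'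
  have h5 : (0:ℝ) ≤ ‖x'‖ := norm_nonneg _
  have hTn : specNorm M = ‖T‖ := rfl
  calc x ⬝ᵥ (M *ᵥ x) = ⟪x', T x'⟫ := h3.symm
    _ ≤ ‖x'‖ * ‖T x'‖ := h1
    _ ≤ ‖x'‖ * (‖T‖ * ‖x'‖) := mul_le_mul_of_nonneg_left h2 h5
    _ = ‖T‖ * (‖x'‖ * ‖x'‖) := by ring
    _ = specNorm M * (x ⬝ᵥ x) := by rw [h4, hTn]

lemma frob_nonneg (M : Matrix (Fin p) (Fin p) ℝ) : 0 ≤ frobNorm M :=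
  Real.sqrt_nonneg _

lemma frob_sq (M : Matrix (Fin p) (Fin p) ℝ) :
    frobNorm M ^ 2 = ∑ i, ∑ j, (M i j) ^ 2 := by
  rw [frobNorm, Real.sq_sqrt]
  exact Finset.sum_nonneg fun i _ => Finset.sum_nonneg fun j _ => sq_nonneg _

lemma quad_le_frob (M : Matrix (Fin p) (Fin p) ℝ) (x : Fin p → ℝ) :
    x ⬝ᵥ (M *ᵥ x) ≤ frobNorm M * (x ⬝ᵥ x) := by
  have hcs := Finset.sum_mul_sq_le_sq_mul_sq (Finset.univ : Finset (Fin p × Fin p))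
    (fun q => M q.1 q.2) (fun q => x q.1 * x q.2)
  have e1 : ∑ q : Fin p × Fin p, (fun q : Fin p × Fin p => M q.1 q.2) q
      * (fun q : Fin p × Fin p => x q.1 * x q.2) q = x ⬝ᵥ (M *ᵥ x) := by
    rw [Fintype.sum_prod_type]
    simp only [dotProduct, Matrix.mulVec, Finset.mul_sum]
    refine Finset.sum_congr rfl fun i _ => Finset.sum_congr rfl fun j _ => by ring
  have e2 : ∑ q : Fin p × Fin p, (fun q : Fin p × Fin p => M q.1 q.2) q ^ 2
      = frobNorm M ^ 2 := by
    rw [frob_sq, Fintype.sum_prod_type]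
  have e3 : ∑ q : Fin p × Fin p, (fun q : Fin p × Fin p => x q.1 * x q.2) q ^ 2
      = (x ⬝ᵥ x) ^ 2 := by
    rw [Fintype.sum_prod_type]
    simp only [dotProduct, mul_pow, ← Finset.sum_mul, ← Finset.mul_sum]
    rw [sq]
    congr 1 <;> exact Finset.sum_congr rfl fun i _ => by ring
  rw [e1, e2, e3] at hcs
  nlinarith [hcs, frob_nonneg M, dot_self_nonneg x,
    mul_nonneg (frob_nonneg M) (dot_self_nonneg x)]

end Aux

/-- Linear-rate restricted strong convexity outside the unit Frobenius ball. -/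
theorem rsc_log_det_linear_rate (p : ℕ) (hp : 1 ≤ p)
    (Θ : Matrix (Fin p) (Fin p) ℝ) (hΘ : Θ.PosDef)
    (Δ : Matrix (Fin p) (Fin p) ℝ) (hΔ : Δ.IsSymm)
    (hpd : (Θ + Δ).PosDef) (hF : 1 ≤ frobNorm Δ) :
    traceInner (Θ⁻¹ - (Θ + Δ)⁻¹) Δ ≥ ((specNorm Θ + 1) ^ 2)⁻¹ * frobNorm Δ := by
  classical
  set s := specNorm Θ with hs_def
  set f := frobNorm Δ with hf_def
  set t := s + f with ht_def
  -- positivity of s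
  have hs : 0 < s := by
    have i0 : Fin p := ⟨0, hp⟩
    have hx : (Pi.single i0 1 : Fin p → ℝ) ≠ 0 := by
      intro h
      have := congrFun h i0
      simp at this
    have hq : 0 < (Pi.single i0 1 : Fin p → ℝ) ⬝ᵥ (Θ *ᵥ Pi.single i0 1) := by
      have := hΘ.dotProduct_mulVec_pos hx
      simpa using this
    have hb := quad_le_spec Θ (Pi.single i0 1)
    have hxx : (Pi.single i0 1 : Fin p → ℝ) ⬝ᵥ (Pi.single i0 1 : Fin p → ℝ) = 1 := by
      simp [single_dotProduct]
    rw [hxx, mul_one] at hb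
    linarith
  have hf0 : (0:ℝ) < f := lt_of_lt_of_le one_pos hF
  have ht : 0 < t := by positivity
  -- invertibility
  have hdet1 : IsUnit Θ.det := isUnit_iff_ne_zero.mpr hΘ.det_pos.ne'
  have hdet2 : IsUnit (Θ + Δ).det := isUnit_iff_ne_zero.mpr hpd.det_pos.ne'
  -- the inverse difference identity
  have hid : Θ⁻¹ - (Θ + Δ)⁻¹ = Θ⁻¹ * Δ * (Θ + Δ)⁻¹ := by
    have h1 : Θ⁻¹ * Θ = 1 := Matrix.nonsing_inv_mul _ hdet1
    have h2 : (Θ + Δ) * (Θ + Δ)⁻¹ = 1 := Matrix.mul_nonsing_inv _ hdet2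
    calc Θ⁻¹ - (Θ + Δ)⁻¹
        = Θ⁻¹ * ((Θ + Δ) * (Θ + Δ)⁻¹) - (Θ⁻¹ * Θ) * (Θ + Δ)⁻¹ := by
          rw [h1, h2]; simp
      _ = Θ⁻¹ * Δ * (Θ + Δ)⁻¹ := by noncomm_ring
  -- PSD remainders
  set R₁ := Θ⁻¹ - s⁻¹ • (1 : Matrix (Fin p) (Fin p) ℝ) with hR₁
  set R₂ := (Θ + Δ)⁻¹ - t⁻¹ • (1 : Matrix (Fin p) (Fin p) ℝ) with hR₂
  have hR₁psd : R₁.PosSemidef := inv_quad_lower hΘ hs (quad_le_spec Θ)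
  have hR₂psd : R₂.PosSemidef := by
    refine inv_quad_lower hpd ht fun x => ?_
    have h1 := quad_le_spec Θ x
    have h2 := quad_le_frob Δ x
    have : x ⬝ᵥ ((Θ + Δ) *ᵥ x) = x ⬝ᵥ (Θ *ᵥ x) + x ⬝ᵥ (Δ *ᵥ x) := by
      rw [Matrix.add_mulVec, dotProduct_add]
    rw [this, ht_def]
    nlinarith [h1, h2]
  have e1 : Θ⁻¹ = s⁻¹ • (1 : Matrix (Fin p) (Fin p) ℝ) + R₁ := by
    rw [hR₁]; abel
  have e2 : (Θ + Δ)⁻¹ = t⁻¹ • (1 : Matrix (Fin p) (Fin p) ℝ) + R₂ := by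
    rw [hR₂]; abel
  -- Δ is PSD squared / hermitian facts
  have hΔH : Δᴴ = Δ := by
    rw [Matrix.conjTranspose_eq_transpose_of_trivial, hΔ.eq]
  have hΔΔpsd : (Δ * Δ).PosSemidef := by
    have := Matrix.posSemidef_conjTranspose_mul_self Δ
    rwa [hΔH] at this
  -- expand the product
  have expand : Θ⁻¹ * Δ * (Θ + Δ)⁻¹ * Δ
      = (s⁻¹ * t⁻¹) • (Δ * Δ) + s⁻¹ • (Δ * (R₂ * Δ)) + t⁻¹ • (R₁ * (Δ * Δ))
        + R₁ * (Δ * (R₂ * Δ)) := by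
    rw [e1, e2]
    simp only [Matrix.add_mul, Matrix.mul_add, Matrix.smul_mul, Matrix.mul_smul,
      Matrix.one_mul, Matrix.mul_one, smul_smul, Matrix.mul_assoc, smul_add]
    module
  -- trace computation
  have htr : traceInner (Θ⁻¹ - (Θ + Δ)⁻¹) Δ
      = (s⁻¹ * t⁻¹) * (Δ * Δ).trace + s⁻¹ * (Δ * (R₂ * Δ)).trace
        + t⁻¹ * (R₁ * (Δ * Δ)).trace + (R₁ * (Δ * (R₂ * Δ))).trace := by
    rw [traceInner, hΔ.eq, hid, expand]
    simp [Matrix.trace_add, Matrix.trace_smul, smul_eq_mul]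
  -- nonnegativity of extra terms
  have hterm2 : 0 ≤ (Δ * (R₂ * Δ)).trace := by
    have h : (Δ * (R₂ * Δ)).trace = (R₂ * (Δ * Δ)).trace := by
      rw [Matrix.trace_mul_comm, Matrix.mul_assoc]
    rw [h]
    exact trace_mul_psd_nonneg hR₂psd hΔΔpsd
  have hterm3 : 0 ≤ (R₁ * (Δ * Δ)).trace := trace_mul_psd_nonneg hR₁psd hΔΔpsd
  have hterm4 : 0 ≤ (R₁ * (Δ * (R₂ * Δ))).trace := by
    have h : (R₁ * (Δ * (R₂ * Δ))).trace = ((Δ * R₁ * Δ) * R₂).trace := by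
      rw [show R₁ * (Δ * (R₂ * Δ)) = (R₁ * (Δ * R₂)) * Δ by simp only [Matrix.mul_assoc]]
      rw [Matrix.trace_mul_comm]
      rw [show Δ * (R₁ * (Δ * R₂)) = (Δ * R₁ * Δ) * R₂ by simp only [Matrix.mul_assoc]]
    rw [h]
    refine trace_mul_psd_nonneg ?_ hR₂psd
    have := hR₁psd.conjTranspose_mul_mul_same Δ
    rwa [hΔH] at this
  -- trace of Δ*Δ
  have htrΔΔ : (Δ * Δ).trace = f ^ 2 := by
    rw [hf_def, frob_sq]
    rw [Matrix.trace]
    simp only [Matrix.diag_apply, Matrix.mul_apply]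
    refine Finset.sum_congr rfl fun i _ => Finset.sum_congr rfl fun j _ => ?_
    rw [hΔ.apply i j, sq]
  -- put it together
  have hlow : traceInner (Θ⁻¹ - (Θ + Δ)⁻¹) Δ ≥ s⁻¹ * t⁻¹ * f ^ 2 := by
    rw [htr, htrΔΔ]
    have h2 : 0 ≤ s⁻¹ * (Δ * (R₂ * Δ)).trace :=
      mul_nonneg (by positivity) hterm2
    have h3 : 0 ≤ t⁻¹ * (R₁ * (Δ * Δ)).trace :=
      mul_nonneg (by positivity) hterm3
    linarith
  have harith : ((s + 1) ^ 2)⁻¹ * f ≤ s⁻¹ * t⁻¹ * f ^ 2 := by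
    have h1 : ((s + 1) ^ 2)⁻¹ * f = f / (s + 1) ^ 2 := by ring
    have h2 : s⁻¹ * t⁻¹ * f ^ 2 = f ^ 2 / (s * t) := by
      rw [div_eq_mul_inv, mul_inv]; ring
    rw [h1, h2, div_le_div_iff₀ (by positivity) (by positivity), ht_def]
    nlinarith [mul_nonneg (mul_nonneg hf0.le (sq_nonneg s)) (sub_nonneg.mpr hF),
      mul_nonneg (mul_nonneg hf0.le hs.le) (sub_nonneg.mpr hF),
      mul_pos hf0 hf0, mul_pos hf0 hs]
  linarith [hlow, harith]
end

section
/- In the Trimmed Graphical Lasso deterministic setting, under hypotheses (H1)–(H4) and assuming the off-diagonal support S of Θ* satisfies |S| ≤ k, the error matrix satisfies the off-diagonal ℓ1 bound ‖Δ̃‖_{1,off} ≤ (2/(λκ))·(3λ√(k+p) + τ1)². (Theorem 1, off-diagonal ℓ1-norm error bound.) -/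
open Matrix

/-- Entrywise ℓ1 norm: ‖U‖₁ = Σ_{i,j} |U_{ij}|. -/
noncomputable def l1Norm {p : ℕ} (U : Matrix (Fin p) (Fin p) ℝ) : ℝ :=
  ∑ i, ∑ j, |U i j|

/-- Off-diagonal entrywise ℓ1 norm: ‖U‖_{1,off} = Σ_{i≠j} |U_{ij}|. -/
noncomputable def offNorm {p : ℕ} (U : Matrix (Fin p) (Fin p) ℝ) : ℝ :=
  ∑ ij ∈ Finset.univ.filter (fun ij : Fin p × Fin p => ij.1 ≠ ij.2), |U ij.1 ij.2|

/-- Entrywise sup norm: ‖U‖_∞ = max_{i,j} |U_{ij}|. -/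
noncomputable def linfNorm {p : ℕ} (U : Matrix (Fin p) (Fin p) ℝ) : ℝ :=
  ⨆ ij : Fin p × Fin p, |U ij.1 ij.2|

lemma traceInner_eq_sum {p : ℕ} (U V : Matrix (Fin p) (Fin p) ℝ) :
    traceInner U V = ∑ i, ∑ j, U i j * V i j := by
  simp [traceInner, Matrix.trace, Matrix.mul_apply, Matrix.diag]

lemma traceInner_sub_left {p : ℕ} (U W V : Matrix (Fin p) (Fin p) ℝ) :
    traceInner (U - W) V = traceInner U V - traceInner W V := by
  simp [traceInner, Matrix.sub_mul]

lemma traceInner_smul_right {p : ℕ} (U V : Matrix (Fin p) (Fin p) ℝ) (t : ℝ) :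
    traceInner U (t • V) = t * traceInner U V := by
  simp [traceInner, Matrix.transpose_smul, Matrix.mul_smul]

lemma ct_eq_t {p : ℕ} (M : Matrix (Fin p) (Fin p) ℝ) : Mᴴ = Mᵀ := by
  ext i j; simp [Matrix.conjTranspose_apply]

lemma trace_nonneg_psd {p : ℕ} {A : Matrix (Fin p) (Fin p) ℝ} (hA : A.PosSemidef) :
    0 ≤ A.trace := by
  exact hA.trace_nonneg

lemma posDef_smul' {p : ℕ} {A : Matrix (Fin p) (Fin p) ℝ} (hA : A.PosDef) {c : ℝ} (hc : 0 < c) :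
    (c • A).PosDef := by
  refine Matrix.PosDef.of_dotProduct_mulVec_pos ?_ ?_
  · show (c • A)ᴴ = c • A
    rw [Matrix.conjTranspose_smul, star_trivial, hA.1]
  · intro x hx
    rw [Matrix.smul_mulVec, dotProduct_smul, smul_eq_mul]
    exact mul_pos hc (hA.dotProduct_mulVec_pos hx)

lemma inv_sub_inv_eq {p : ℕ} {A B : Matrix (Fin p) (Fin p) ℝ} (hA : A.PosDef) (hB : B.PosDef) :
    A⁻¹ - B⁻¹ = A⁻¹ * (B - A) * B⁻¹ := by
  have hAu : IsUnit A.det := hA.det_pos.ne'.isUnit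
  have hBu : IsUnit B.det := hB.det_pos.ne'.isUnit
  rw [Matrix.mul_sub, Matrix.sub_mul, Matrix.mul_assoc,
    Matrix.mul_nonsing_inv _ hBu, Matrix.nonsing_inv_mul _ hAu, Matrix.mul_one, Matrix.one_mul]

lemma traceInner_mono {p : ℕ} {A B : Matrix (Fin p) (Fin p) ℝ} (hA : A.PosDef) (hB : B.PosDef) :
    0 ≤ traceInner (A⁻¹ - B⁻¹) (B - A) := by
  set C := B - A with hC
  have hCt : Cᵀ = C := by
    rw [hC, Matrix.transpose_sub, ← ct_eq_t, ← ct_eq_t, hA.1, hB.1]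
  have hCh : Cᴴ = C := by rw [ct_eq_t, hCt]
  obtain ⟨Q, hQ, hQh⟩ : ∃ Q : Matrix (Fin p) (Fin p) ℝ, Q * Q = B⁻¹ ∧ Qᴴ = Q := by
    open scoped MatrixOrder in
    exact ⟨CFC.sqrt B⁻¹, CFC.sqrt_mul_sqrt_self _ hB.inv.posSemidef.nonneg,
      (CFC.sqrt_nonneg _).posSemidef.isHermitian⟩
  rw [inv_sub_inv_eq hA hB, traceInner, hCt]
  rw [show A⁻¹ * C * B⁻¹ * C = (A⁻¹ * (C * Q)) * (Q * C) from by rw [← hQ]; noncomm_ring]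
  rw [Matrix.trace_mul_comm]
  rw [show (Q * C) * (A⁻¹ * (C * Q)) = Qᴴ * (Cᴴ * A⁻¹ * C) * Q from by
    rw [hQh, hCh]; noncomm_ring]
  exact trace_nonneg_psd ((hA.inv.posSemidef.conjTranspose_mul_mul_same C).conjTranspose_mul_mul_same Q)


lemma frobNorm_nonneg {p : ℕ} (U : Matrix (Fin p) (Fin p) ℝ) : 0 ≤ frobNorm U :=
  Real.sqrt_nonneg _

lemma frobNorm_sq {p : ℕ} (U : Matrix (Fin p) (Fin p) ℝ) :
    frobNorm U ^ 2 = ∑ i, ∑ j, (U i j) ^ 2 := by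
  rw [frobNorm, Real.sq_sqrt]
  exact Finset.sum_nonneg fun i _ => Finset.sum_nonneg fun j _ => sq_nonneg _

lemma frobNorm_smul {p : ℕ} (U : Matrix (Fin p) (Fin p) ℝ) {t : ℝ} (ht : 0 ≤ t) :
    frobNorm (t • U) = t * frobNorm U := by
  rw [frobNorm, frobNorm]
  have : ∑ i, ∑ j, ((t • U) i j) ^ 2 = t ^ 2 * ∑ i, ∑ j, (U i j) ^ 2 := by
    simp [Finset.mul_sum, mul_pow]
  rw [this, Real.sqrt_mul (sq_nonneg t), Real.sqrt_sq ht]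

lemma abs_traceInner_le {p : ℕ} (U V : Matrix (Fin p) (Fin p) ℝ) (hp : 0 < p) :
    |traceInner U V| ≤ linfNorm U * l1Norm V := by
  rw [traceInner_eq_sum, l1Norm]
  have hb : ∀ i j, |U i j| ≤ linfNorm U := by
    intro i j
    exact le_ciSup (f := fun ij : Fin p × Fin p => |U ij.1 ij.2|)
      (Set.Finite.bddAbove (Set.finite_range _)) (i, j)
  calc |∑ i, ∑ j, U i j * V i j| ≤ ∑ i, ∑ j, |U i j * V i j| := by
        refine (Finset.abs_sum_le_sum_abs _ _).trans ?_
        refine Finset.sum_le_sum fun i _ => Finset.abs_sum_le_sum_abs _ _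
    _ ≤ ∑ i, ∑ j, linfNorm U * |V i j| := by
        refine Finset.sum_le_sum fun i _ => Finset.sum_le_sum fun j _ => ?_
        rw [abs_mul]
        exact mul_le_mul_of_nonneg_right (hb i j) (abs_nonneg _)
    _ = linfNorm U * ∑ i, ∑ j, |V i j| := by rw [Finset.mul_sum]; simp [Finset.mul_sum]

lemma sum_abs_le_sqrt_card_mul_frob {p : ℕ} (U : Matrix (Fin p) (Fin p) ℝ)
    (T : Finset (Fin p × Fin p)) :
    ∑ ij ∈ T, |U ij.1 ij.2| ≤ Real.sqrt (T.card) * frobNorm U := by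
  have h1 : (∑ ij ∈ T, |U ij.1 ij.2|) ^ 2 ≤ (T.card : ℝ) * ∑ ij ∈ T, |U ij.1 ij.2| ^ 2 := by
    exact_mod_cast sq_sum_le_card_mul_sum_sq (s := T) (f := fun ij => |U ij.1 ij.2|)
  have h2 : ∑ ij ∈ T, |U ij.1 ij.2| ^ 2 ≤ frobNorm U ^ 2 := by
    rw [frobNorm_sq]
    rw [show (∑ i, ∑ j, U i j ^ 2) = ∑ ij : Fin p × Fin p, U ij.1 ij.2 ^ 2 from
      (Fintype.sum_prod_type (f := fun ij : Fin p × Fin p => U ij.1 ij.2 ^ 2)).symm]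
    simp only [sq_abs]
    exact Finset.sum_le_sum_of_subset_of_nonneg (Finset.subset_univ T)
      (fun ij _ _ => sq_nonneg _)
  have hnn : 0 ≤ ∑ ij ∈ T, |U ij.1 ij.2| :=
    Finset.sum_nonneg fun ij _ => abs_nonneg _
  have := h1.trans (mul_le_mul_of_nonneg_left h2 (Nat.cast_nonneg _))
  calc ∑ ij ∈ T, |U ij.1 ij.2| = Real.sqrt ((∑ ij ∈ T, |U ij.1 ij.2|) ^ 2) :=
        (Real.sqrt_sq hnn).symm
    _ ≤ Real.sqrt ((T.card : ℝ) * frobNorm U ^ 2) := Real.sqrt_le_sqrt this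
    _ = Real.sqrt (T.card) * frobNorm U := by
        rw [Real.sqrt_mul (Nat.cast_nonneg _), Real.sqrt_sq (frobNorm_nonneg U)]

lemma traceInner_add_left {p : ℕ} (U W V : Matrix (Fin p) (Fin p) ℝ) :
    traceInner (U + W) V = traceInner U V + traceInner W V := by
  simp [traceInner, Matrix.add_mul]

lemma l1Norm_nonneg {p : ℕ} (U : Matrix (Fin p) (Fin p) ℝ) : 0 ≤ l1Norm U :=
  Finset.sum_nonneg fun i _ => Finset.sum_nonneg fun j _ => abs_nonneg _

lemma l1Norm_sub_le {p : ℕ} (X Y : Matrix (Fin p) (Fin p) ℝ) :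
    l1Norm (X - Y) ≤ l1Norm X + l1Norm Y := by
  rw [l1Norm, l1Norm, l1Norm, ← Finset.sum_add_distrib]
  refine Finset.sum_le_sum fun i _ => ?_
  rw [← Finset.sum_add_distrib]
  exact Finset.sum_le_sum fun j _ => abs_sub _ _

lemma l1Norm_eq_prod {p : ℕ} (U : Matrix (Fin p) (Fin p) ℝ) :
    l1Norm U = ∑ ij : Fin p × Fin p, |U ij.1 ij.2| :=
  (Fintype.sum_prod_type (f := fun ij : Fin p × Fin p => |U ij.1 ij.2|)).symm

/-- Theorem 1, off-diagonal ℓ1-norm error bound. -/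
theorem error_offNorm_bound
    (p n h : ℕ) (hp : 0 < p) (hn : 0 < n) (hh : 0 < h)
    (x : Fin n → Fin p → ℝ)
    (Θstar Θtil : Matrix (Fin p) (Fin p) ℝ)
    (hΘstar : Θstar.PosDef) (hΘtil : Θtil.PosDef)
    (R : ℝ) (hR : 0 < R) (hΘstarR : l1Norm Θstar ≤ R) (hΘtilR : l1Norm Θtil ≤ R)
    (wtil wstar : Fin n → ℝ)
    (hwtil : ∀ i, wtil i ∈ Set.Icc (0 : ℝ) 1) (hwstar : ∀ i, wstar i ∈ Set.Icc (0 : ℝ) 1)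
    (κ τ₁ τ₂ lam : ℝ) (hκ : 0 < κ) (hτ₁ : 0 ≤ τ₁) (hτ₂ : 0 ≤ τ₂) (hlam : 0 < lam)
    (H1 : traceInner
        ((1 / (h : ℝ)) • ∑ i, wtil i • Matrix.vecMulVec (x i) (x i) - Θtil⁻¹)
        (Θtil - Θstar) ≤ lam * (offNorm Θstar - offNorm Θtil))
    (H2 : ∀ Δ : Matrix (Fin p) (Fin p) ℝ, Δ.IsSymm → (Θstar + Δ).PosDef →
        frobNorm Δ ≤ 1 →
        traceInner (Θstar⁻¹ - (Θstar + Δ)⁻¹) Δ ≥ κ * (frobNorm Δ) ^ 2)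
    (H3 : |traceInner
        ((1 / (h : ℝ)) • ∑ i, (wtil i - wstar i) • Matrix.vecMulVec (x i) (x i))
        (Θtil - Θstar)|
        ≤ τ₁ * frobNorm (Θtil - Θstar) + τ₂ * l1Norm (Θtil - Θstar))
    (H4a : 4 * max
        (linfNorm ((1 / (h : ℝ)) • ∑ i, wstar i • Matrix.vecMulVec (x i) (x i) - Θstar⁻¹))
        τ₂ ≤ lam)
    (H4b : lam ≤ (κ - τ₁) / (3 * R))
    (k : ℕ)
    (hk : (Finset.univ.filter
        (fun ij : Fin p × Fin p => ij.1 ≠ ij.2 ∧ Θstar ij.1 ij.2 ≠ 0)).card ≤ k) :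
    offNorm (Θtil - Θstar) ≤
      (2 / (lam * κ)) * (3 * lam * Real.sqrt ((k : ℝ) + p) + τ₁) ^ 2 := by
  set Δ : Matrix (Fin p) (Fin p) ℝ := Θtil - Θstar with hΔ
  set F : ℝ := frobNorm Δ with hFdef
  set s : ℝ := Real.sqrt ((k : ℝ) + p) with hsdef
  have hs0 : 0 ≤ s := Real.sqrt_nonneg _
  have hF0 : 0 ≤ F := frobNorm_nonneg Δ
  set Wt : Matrix (Fin p) (Fin p) ℝ :=
    (1 / (h : ℝ)) • ∑ i, wtil i • Matrix.vecMulVec (x i) (x i) with hWt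
  set Ws : Matrix (Fin p) (Fin p) ℝ :=
    (1 / (h : ℝ)) • ∑ i, wstar i • Matrix.vecMulVec (x i) (x i) with hWs
  set offS : Finset (Fin p × Fin p) :=
    Finset.univ.filter (fun ij : Fin p × Fin p => ij.1 ≠ ij.2) with hoffS
  set S : Finset (Fin p × Fin p) :=
    Finset.univ.filter (fun ij : Fin p × Fin p => ij.1 ≠ ij.2 ∧ Θstar ij.1 ij.2 ≠ 0) with hSdef
  set dg : Finset (Fin p × Fin p) :=
    Finset.univ.filter (fun ij : Fin p × Fin p => ij.1 = ij.2) with hdg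
  have hSsub : S ⊆ offS := by
    intro ij hij
    simp only [hSdef, hoffS, Finset.mem_filter, Finset.mem_univ, true_and] at hij ⊢
    exact hij.1
  set Sc : Finset (Fin p × Fin p) := offS \ S with hSc
  set A : ℝ := ∑ ij ∈ S, |Δ ij.1 ij.2| with hAdef
  set B : ℝ := ∑ ij ∈ Sc, |Δ ij.1 ij.2| with hBdef
  set Dg : ℝ := ∑ ij ∈ dg, |Δ ij.1 ij.2| with hDgdef
  have hA0 : 0 ≤ A := Finset.sum_nonneg fun ij _ => abs_nonneg _
  have hB0 : 0 ≤ B := Finset.sum_nonneg fun ij _ => abs_nonneg _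
  have hDg0 : 0 ≤ Dg := Finset.sum_nonneg fun ij _ => abs_nonneg _
  -- off-norm splits
  have hoffsplit : offNorm Δ = A + B := by
    rw [offNorm, hAdef, hBdef, ← Finset.sum_sdiff hSsub, ← hSc]
    ring
  -- l1-norm split
  have hl1split : l1Norm Δ = A + B + Dg := by
    rw [l1Norm_eq_prod]
    have hnot : Finset.univ.filter (fun ij : Fin p × Fin p => ¬ ij.1 ≠ ij.2) = dg := by
      rw [hdg]; congr 1; ext ij; simp
    rw [← Finset.sum_filter_add_sum_filter_not Finset.univ
      (fun ij : Fin p × Fin p => ij.1 ≠ ij.2) (fun ij => |Δ ij.1 ij.2|), hnot, ← hoffS]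
    rw [hAdef, hBdef, hDgdef, ← Finset.sum_sdiff hSsub, ← hSc]
    ring
  have hl1_2R : l1Norm Δ ≤ 2 * R := by
    calc l1Norm Δ ≤ l1Norm Θtil + l1Norm Θstar := l1Norm_sub_le _ _
      _ ≤ 2 * R := by linarith
  -- off-diag decomposition bound
  have hoffbd : offNorm Θstar - offNorm Θtil ≤ A - B := by
    rw [offNorm, offNorm, ← hoffS, ← Finset.sum_sub_distrib,
      ← Finset.sum_sdiff hSsub (f := fun ij => |Θstar ij.1 ij.2| - |Θtil ij.1 ij.2|), ← hSc]
    have e1 : ∑ ij ∈ Sc, (|Θstar ij.1 ij.2| - |Θtil ij.1 ij.2|) = -B := by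
      rw [hBdef, ← Finset.sum_neg_distrib]
      refine Finset.sum_congr rfl fun ij hij => ?_
      have hmem : ij.1 ≠ ij.2 ∧ ¬(ij.1 ≠ ij.2 ∧ Θstar ij.1 ij.2 ≠ 0) := by
        simpa [hSc, hoffS, hSdef, Finset.mem_sdiff, Finset.mem_filter] using hij
      have hzero : Θstar ij.1 ij.2 = 0 := by
        by_contra hz; exact hmem.2 ⟨hmem.1, hz⟩
      rw [hΔ]
      simp [Matrix.sub_apply, hzero]
    have e2 : ∑ ij ∈ S, (|Θstar ij.1 ij.2| - |Θtil ij.1 ij.2|) ≤ A := by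
      rw [hAdef]
      refine Finset.sum_le_sum fun ij _ => ?_
      calc |Θstar ij.1 ij.2| - |Θtil ij.1 ij.2| ≤ |Θstar ij.1 ij.2 - Θtil ij.1 ij.2| :=
            abs_sub_abs_le_abs_sub _ _
        _ = |Δ ij.1 ij.2| := by rw [hΔ, Matrix.sub_apply, abs_sub_comm]
    rw [e1]
    linarith
  -- Cauchy-Schwarz bound on S ∪ diag
  have hADs : A + Dg ≤ s * F := by
    have hdisj : Disjoint S dg := by
      rw [Finset.disjoint_left]
      intro ij hij1 hij2
      simp only [hSdef, Finset.mem_filter, Finset.mem_univ, true_and] at hij1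
      simp only [hdg, Finset.mem_filter, Finset.mem_univ, true_and] at hij2
      exact hij1.1 hij2
    have hcard : ((S ∪ dg).card : ℝ) ≤ (k : ℝ) + p := by
      have h1 : (S ∪ dg).card ≤ S.card + dg.card := Finset.card_union_le _ _
      have h2 : dg.card = p := by
        have : dg = Finset.univ.image (fun i : Fin p => ((i, i) : Fin p × Fin p)) := by
          rw [hdg]
          ext ij
          simp only [Finset.mem_filter, Finset.mem_univ, true_and, Finset.mem_image]
          obtain ⟨a, b⟩ := ij
          constructor
          · intro hab; exact ⟨a, Prod.ext rfl hab⟩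
          · rintro ⟨i, hi⟩
            injection hi with h1' h2'
            rw [← h1', ← h2']
        rw [this, Finset.card_image_of_injective _
          (fun a b hab => congrArg Prod.fst hab)]
        simp
      have := hk
      push_cast
      have h3 : (S.card : ℝ) ≤ k := by exact_mod_cast hk
      have h4 : ((S ∪ dg).card : ℝ) ≤ (S.card : ℝ) + (dg.card : ℝ) := by exact_mod_cast h1
      rw [h2] at h4
      linarith
    calc A + Dg = ∑ ij ∈ S ∪ dg, |Δ ij.1 ij.2| := by
          rw [hAdef, hDgdef, Finset.sum_union hdisj]
      _ ≤ Real.sqrt ((S ∪ dg).card) * F := sum_abs_le_sqrt_card_mul_frob Δ _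
      _ ≤ s * F := by
          refine mul_le_mul_of_nonneg_right ?_ hF0
          rw [hsdef]
          exact Real.sqrt_le_sqrt hcard
  -- bounds from H4a
  have hlinfG : linfNorm (Ws - Θstar⁻¹) ≤ lam / 4 := by
    have := le_max_left (linfNorm (Ws - Θstar⁻¹)) τ₂
    linarith
  have hτ₂lam : τ₂ ≤ lam / 4 := by
    have := le_max_right (linfNorm (Ws - Θstar⁻¹)) τ₂
    linarith
  -- KEY inequality
  have hKEY : traceInner (Θstar⁻¹ - Θtil⁻¹) Δ ≤
      lam * (A - B) + (lam / 2) * (A + B + Dg) + τ₁ * F := by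
    have hE : (1 / (h : ℝ)) • ∑ i, (wtil i - wstar i) • Matrix.vecMulVec (x i) (x i)
        = Wt - Ws := by
      rw [hWt, hWs, ← smul_sub, ← Finset.sum_sub_distrib]
      congr 1
      refine Finset.sum_congr rfl fun i _ => ?_
      rw [sub_smul]
    have hdecomp : Θstar⁻¹ - Θtil⁻¹ = (Wt - Θtil⁻¹) - (Wt - Ws) - (Ws - Θstar⁻¹) := by abel
    rw [hdecomp, traceInner_sub_left, traceInner_sub_left]
    have h1 : traceInner (Wt - Θtil⁻¹) Δ ≤ lam * (offNorm Θstar - offNorm Θtil) := H1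
    have h3 : |traceInner (Wt - Ws) Δ| ≤ τ₁ * F + τ₂ * l1Norm Δ := by rw [← hE]; exact H3
    have h4 : |traceInner (Ws - Θstar⁻¹) Δ| ≤ (lam / 4) * l1Norm Δ := by
      refine (abs_traceInner_le _ _ hp).trans ?_
      exact mul_le_mul_of_nonneg_right hlinfG (l1Norm_nonneg _)
    have h5 : lam * (offNorm Θstar - offNorm Θtil) ≤ lam * (A - B) :=
      mul_le_mul_of_nonneg_left hoffbd hlam.le
    have h6 : τ₂ * l1Norm Δ ≤ (lam / 4) * l1Norm Δ :=
      mul_le_mul_of_nonneg_right hτ₂lam (l1Norm_nonneg _)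
    have h7 := abs_le.mp h3
    have h8 := abs_le.mp h4
    rw [hl1split] at h6 h7 h8
    linarith [h7.1, h8.1]
  clear_value A B Dg s F
  -- abstract the trace inner product
  obtain ⟨X, hXdef⟩ : ∃ X : ℝ, X = traceInner (Θstar⁻¹ - Θtil⁻¹) Δ := ⟨_, rfl⟩
  rw [← hXdef] at hKEY
  -- symmetry of Δ
  have hΘstarT : Θstarᵀ = Θstar := by rw [← ct_eq_t, hΘstar.1]
  have hΘtilT : Θtilᵀ = Θtil := by rw [← ct_eq_t, hΘtil.1]
  have hΔsymm : Δ.IsSymm := by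
    show Δᵀ = Δ
    rw [hΔ, Matrix.transpose_sub, hΘstarT, hΘtilT]
  -- κ - τ₁ bound
  have h3R : 3 * R * lam ≤ κ - τ₁ := by
    have h3Rpos : (0 : ℝ) < 3 * R := by linarith
    calc 3 * R * lam ≤ 3 * R * ((κ - τ₁) / (3 * R)) :=
          mul_le_mul_of_nonneg_left H4b (by linarith)
      _ = κ - τ₁ := by field_simp
  have hκτ : 0 < κ - τ₁ := lt_of_lt_of_le (by positivity) h3R
  have hl1R : A + B + Dg ≤ 2 * R := by rw [← hl1split]; exact hl1_2R
  -- F ≤ 1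
  have hF1 : F ≤ 1 := by
    by_contra hcon
    push_neg at hcon
    have hFpos : 0 < F := lt_trans one_pos hcon
    set t : ℝ := 1 / F with htdef
    have ht0 : 0 < t := by positivity
    have ht1 : t < 1 := by rw [htdef]; rw [div_lt_one hFpos]; exact hcon
    have htF : t * F = 1 := by rw [htdef]; field_simp
    have hMeq : Θstar + t • Δ = (1 - t) • Θstar + t • Θtil := by
      rw [hΔ]; module
    have hMpd : (Θstar + t • Δ).PosDef := by
      rw [hMeq]
      exact (posDef_smul' hΘstar (by linarith)).add (posDef_smul' hΘtil ht0)
    have hsymm' : (t • Δ).IsSymm := by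
      show (t • Δ)ᵀ = t • Δ
      rw [Matrix.transpose_smul, hΔsymm]
    have hfrob : frobNorm (t • Δ) = 1 := by
      rw [frobNorm_smul _ ht0.le, ← hFdef, htF]
    obtain ⟨Y, hYdef⟩ : ∃ Y : ℝ, Y = traceInner (Θstar⁻¹ - (Θstar + t • Δ)⁻¹) Δ := ⟨_, rfl⟩
    obtain ⟨Z, hZdef⟩ : ∃ Z : ℝ, Z = traceInner ((Θstar + t • Δ)⁻¹ - Θtil⁻¹) Δ := ⟨_, rfl⟩
    have hH2 := H2 (t • Δ) hsymm' hMpd (le_of_eq hfrob)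
    rw [hfrob, traceInner_smul_right, ← hYdef] at hH2
    -- monotonicity
    have hmono := traceInner_mono hMpd hΘtil
    have hrw : Θtil - (Θstar + t • Δ) = (1 - t) • Δ := by rw [hΔ]; module
    rw [hrw, traceInner_smul_right, ← hZdef] at hmono
    have h1t : (0 : ℝ) < 1 - t := by linarith
    have hZ0 : 0 ≤ Z := by
      by_contra hneg
      push_neg at hneg
      exact absurd hmono (not_le.mpr (mul_neg_of_pos_of_neg h1t hneg))
    have hXYZ : X = Y + Z := by
      rw [hXdef, hYdef, hZdef, ← traceInner_add_left]
      congr 1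
      abel
    have hcomp : Y ≤ X := by linarith only [hXYZ, hZ0]
    have hchain1 : κ ≤ t * X := by
      have h1' : κ * 1 ^ 2 ≤ t * Y := hH2
      have h2' : t * Y ≤ t * X := mul_le_mul_of_nonneg_left hcomp ht0.le
      linarith only [h1', h2']
    have hK2 : X ≤ 3 * lam * R + τ₁ * F := by
      have hb := mul_nonneg hlam.le hB0
      have hd := mul_nonneg hlam.le hDg0
      have h2R : (3 * lam / 2) * (A + B + Dg) ≤ (3 * lam / 2) * (2 * R) :=
        mul_le_mul_of_nonneg_left hl1R (by positivity)
      linarith only [hKEY, hb, hd, h2R]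
    have hfin : t * X ≤ 3 * lam * R * t + τ₁ := by
      have h1' : t * X ≤ t * (3 * lam * R + τ₁ * F) :=
        mul_le_mul_of_nonneg_left hK2 ht0.le
      have h2' : t * (3 * lam * R + τ₁ * F) = 3 * lam * R * t + τ₁ * (t * F) := by ring
      rw [h2', htF] at h1'
      linarith only [h1']
    have hlast : 3 * lam * R * t < κ - τ₁ := by
      have h3' : 3 * lam * R ≤ κ - τ₁ := by linarith only [h3R]
      have e1 : 3 * lam * R * t ≤ (κ - τ₁) * t := mul_le_mul_of_nonneg_right h3' ht0.le
      have e2 : (κ - τ₁) * t < (κ - τ₁) * 1 := mul_lt_mul_of_pos_left ht1 hκτ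
      linarith only [e1, e2]
    linarith only [hchain1, hfin, hlast]
  -- main application of H2
  have hΘeq : Θstar + Δ = Θtil := by rw [hΔ]; abel
  have hH2m : κ * F ^ 2 ≤ X := by
    have hF1' : frobNorm Δ ≤ 1 := by rw [← hFdef]; exact hF1
    have h2' := H2 Δ hΔsymm (by rw [hΘeq]; exact hΘtil) hF1'
    rw [hΘeq, ← hFdef, ← hXdef] at h2'
    exact h2'
  have hkey2 : κ * F ^ 2 ≤ lam * (A - B) + (lam / 2) * (A + B + Dg) + τ₁ * F :=
    le_trans hH2m hKEY
  -- derive: κ F² + (lam/2) B ≤ ((3 lam/2) s + τ₁) F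
  have h5 : κ * F ^ 2 + (lam / 2) * B ≤ ((3 * lam / 2) * s + τ₁) * F := by
    have hm : (3 * lam / 2) * (A + Dg) ≤ (3 * lam / 2) * (s * F) :=
      mul_le_mul_of_nonneg_left hADs (by positivity)
    linarith only [hkey2, hm, mul_nonneg hlam.le hDg0, mul_nonneg hlam.le hB0]
  have hFb : κ * F ≤ (3 * lam / 2) * s + τ₁ := by
    rcases eq_or_lt_of_le hF0 with hF00 | hFpos
    · rw [← hF00, mul_zero]; positivity
    · have h5' : (κ * F) * F ≤ ((3 * lam / 2) * s + τ₁) * F := by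
        have hb := mul_nonneg hlam.le hB0
        linarith only [h5, hb]
      exact le_of_mul_le_mul_right h5' hFpos
  have h6 : (lam / 2) * (A + B) ≤ (2 * lam * s + τ₁) * F := by
    have hm : (lam / 2) * (A + Dg) ≤ (lam / 2) * (s * F) :=
      mul_le_mul_of_nonneg_left hADs (by positivity)
    linarith only [h5, hm, mul_nonneg hκ.le (sq_nonneg F), mul_nonneg hlam.le hDg0]
  -- final arithmetic
  rw [hoffsplit]
  rw [show (2 / (lam * κ)) * (3 * lam * s + τ₁) ^ 2
      = ((3 * lam * s + τ₁) ^ 2 * 2) / (lam * κ) from by ring,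
    le_div_iff₀ (mul_pos hlam hκ)]
  have e1 : κ * ((lam / 2) * (A + B)) ≤ κ * ((2 * lam * s + τ₁) * F) :=
    mul_le_mul_of_nonneg_left h6 hκ.le
  have e2 : (2 * lam * s + τ₁) * (κ * F) ≤ (2 * lam * s + τ₁) * ((3 * lam / 2) * s + τ₁) :=
    mul_le_mul_of_nonneg_left hFb (by positivity)
  have e3 : (2 * lam * s + τ₁) * ((3 * lam / 2) * s + τ₁) ≤ (3 * lam * s + τ₁) ^ 2 := by
    linarith only [mul_nonneg (mul_nonneg hlam.le hs0) hτ₁, sq_nonneg (lam * s)]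
  linarith only [e1, e2, e3]
end

section
/- In the Trimmed Graphical Lasso deterministic setting, under hypotheses (H1)–(H4) and assuming the off-diagonal support S of Θ* satisfies |S| ≤ k, the error matrix satisfies the cone-type inequality Σ_{(i,j)∉S, i≠j}|Δ̃_{ij}| ≤ 3·Σ_{(i,j)∈S}|Δ̃_{ij}| + Σ_{i=1}^p |Δ̃_{ii}| + (2τ1/λ)·‖Δ̃‖_F. (Intermediate inequality in the proof of the off-diagonal ℓ1 bound of Theorem 1.) -/
open Matrix

namespace ConeAux

lemma trace_nonneg' {n : Type*} [Fintype n] [DecidableEq n] {A : Matrix n n ℝ}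
    (hA : A.PosSemidef) : 0 ≤ A.trace := by
  apply Finset.sum_nonneg
  intro i _
  exact hA.diag_nonneg

lemma transpose_eq {n : Type*} [Fintype n] {A : Matrix n n ℝ} (hA : A.IsHermitian) :
    Aᵀ = A := by
  ext i j; simpa using (congrFun (congrFun hA j) i).symm

lemma traceInner_add_left {p : ℕ} (U V W : Matrix (Fin p) (Fin p) ℝ) :
    traceInner (U + V) W = traceInner U W + traceInner V W := by
  simp [traceInner, add_mul]

lemma traceInner_eq_sum {p : ℕ} (U V : Matrix (Fin p) (Fin p) ℝ) :
    traceInner U V = ∑ i, ∑ j, U i j * V i j := by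
  simp [traceInner, Matrix.trace, Matrix.diag, Matrix.mul_apply]

lemma abs_traceInner_le {p : ℕ} (hp : 0 < p) (U V : Matrix (Fin p) (Fin p) ℝ) :
    |traceInner U V| ≤ linfNorm U * l1Norm V := by
  have hnon : Nonempty (Fin p × Fin p) := ⟨⟨⟨0, hp⟩, ⟨0, hp⟩⟩⟩
  have hbd : ∀ i j : Fin p, |U i j| ≤ linfNorm U := fun i j =>
    le_ciSup (f := fun ij : Fin p × Fin p => |U ij.1 ij.2|)
      (Set.Finite.bddAbove (Set.finite_range _)) ((i, j) : Fin p × Fin p)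
  rw [traceInner_eq_sum, l1Norm]
  calc |∑ i, ∑ j, U i j * V i j| ≤ ∑ i, ∑ j, |U i j * V i j| :=
        (Finset.abs_sum_le_sum_abs _ _).trans
          (Finset.sum_le_sum fun i _ => Finset.abs_sum_le_sum_abs _ _)
    _ ≤ ∑ i, ∑ j, linfNorm U * |V i j| := by
        refine Finset.sum_le_sum fun i _ => Finset.sum_le_sum fun j _ => ?_
        rw [abs_mul]
        exact mul_le_mul_of_nonneg_right (hbd i j) (abs_nonneg _)
    _ = linfNorm U * ∑ i, ∑ j, |V i j| := by
        simp [Finset.mul_sum]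

open scoped MatrixOrder in
lemma trace_mono {p : ℕ} {A B : Matrix (Fin p) (Fin p) ℝ}
    (hA : A.PosDef) (hB : B.PosDef) :
    0 ≤ ((A⁻¹ - B⁻¹) * (B - A)).trace := by
  have hAd : IsUnit A.det := hA.det_pos.ne'.isUnit
  have hBd : IsUnit B.det := hB.det_pos.ne'.isUnit
  set M := B - A with hM
  have hMh : M.IsHermitian := hB.1.sub hA.1
  have hdiff : A⁻¹ - B⁻¹ = A⁻¹ * M * B⁻¹ := by
    rw [hM, Matrix.mul_sub, Matrix.sub_mul, Matrix.mul_assoc,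
      Matrix.mul_nonsing_inv B hBd, Matrix.nonsing_inv_mul A hAd,
      Matrix.mul_one, Matrix.one_mul]
  have hBinv : (B⁻¹).PosSemidef := hB.inv.posSemidef
  obtain ⟨S, hSh, hSS⟩ : ∃ S : Matrix (Fin p) (Fin p) ℝ, S.IsHermitian ∧ S * S = B⁻¹ :=
    ⟨CFC.sqrt B⁻¹, (CFC.sqrt_nonneg _).posSemidef.isHermitian,
      CFC.sqrt_mul_sqrt_self _ hBinv.nonneg⟩
  have hpsd : ((M * S)ᴴ * A⁻¹ * (M * S)).PosSemidef :=
    hA.inv.posSemidef.conjTranspose_mul_mul_same (M * S)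
  have heq : (A⁻¹ - B⁻¹) * M = A⁻¹ * M * (S * S) * M := by
    rw [hdiff, hSS]
  have hcyc : ((A⁻¹ - B⁻¹) * M).trace = ((M * S)ᴴ * A⁻¹ * (M * S)).trace := by
    rw [heq]
    have h1 : A⁻¹ * M * (S * S) * M = (A⁻¹ * M * S) * (S * M) := by
      simp [Matrix.mul_assoc]
    rw [h1, Matrix.trace_mul_comm, Matrix.conjTranspose_mul, hSh.eq, hMh.eq]
    congr 1
    simp [Matrix.mul_assoc]
  rw [hcyc]
  exact trace_nonneg' hpsd

end ConeAux

/-- Cone-type inequality from the proof of the off-diagonal ℓ1 bound of Theorem 1. -/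
theorem cone_inequality
    (p n h : ℕ) (hp : 0 < p) (hn : 0 < n) (hh : 0 < h)
    (x : Fin n → Fin p → ℝ)
    (Θstar Θtil : Matrix (Fin p) (Fin p) ℝ)
    (hΘstar : Θstar.PosDef) (hΘtil : Θtil.PosDef)
    (R : ℝ) (hR : 0 < R) (hΘstarR : l1Norm Θstar ≤ R) (hΘtilR : l1Norm Θtil ≤ R)
    (wtil wstar : Fin n → ℝ)
    (hwtil : ∀ i, wtil i ∈ Set.Icc (0 : ℝ) 1) (hwstar : ∀ i, wstar i ∈ Set.Icc (0 : ℝ) 1)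
    (κ τ₁ τ₂ lam : ℝ) (hκ : 0 < κ) (hτ₁ : 0 ≤ τ₁) (hτ₂ : 0 ≤ τ₂) (hlam : 0 < lam)
    (H1 : traceInner
        ((1 / (h : ℝ)) • ∑ i, wtil i • Matrix.vecMulVec (x i) (x i) - Θtil⁻¹)
        (Θtil - Θstar) ≤ lam * (offNorm Θstar - offNorm Θtil))
    (H2 : ∀ Δ : Matrix (Fin p) (Fin p) ℝ, Δ.IsSymm → (Θstar + Δ).PosDef →
        frobNorm Δ ≤ 1 →
        traceInner (Θstar⁻¹ - (Θstar + Δ)⁻¹) Δ ≥ κ * (frobNorm Δ) ^ 2)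
    (H3 : |traceInner
        ((1 / (h : ℝ)) • ∑ i, (wtil i - wstar i) • Matrix.vecMulVec (x i) (x i))
        (Θtil - Θstar)|
        ≤ τ₁ * frobNorm (Θtil - Θstar) + τ₂ * l1Norm (Θtil - Θstar))
    (H4a : 4 * max
        (linfNorm ((1 / (h : ℝ)) • ∑ i, wstar i • Matrix.vecMulVec (x i) (x i) - Θstar⁻¹))
        τ₂ ≤ lam)
    (H4b : lam ≤ (κ - τ₁) / (3 * R))
    (k : ℕ)
    (hk : (Finset.univ.filter
        (fun ij : Fin p × Fin p => ij.1 ≠ ij.2 ∧ Θstar ij.1 ij.2 ≠ 0)).card ≤ k) :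
    (∑ ij ∈ (Finset.univ.filter (fun ij : Fin p × Fin p => ij.1 ≠ ij.2)) \
        (Finset.univ.filter (fun ij : Fin p × Fin p => ij.1 ≠ ij.2 ∧ Θstar ij.1 ij.2 ≠ 0)),
        |(Θtil - Θstar) ij.1 ij.2|) ≤
      3 * (∑ ij ∈ Finset.univ.filter (fun ij : Fin p × Fin p => ij.1 ≠ ij.2 ∧ Θstar ij.1 ij.2 ≠ 0),
          |(Θtil - Θstar) ij.1 ij.2|)
        + (∑ i, |(Θtil - Θstar) i i|)
        + (2 * τ₁ / lam) * frobNorm (Θtil - Θstar) := by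
  classical
  set Δ := Θtil - Θstar with hΔdef
  set Soff := Finset.univ.filter (fun ij : Fin p × Fin p => ij.1 ≠ ij.2) with hSoff
  set SS := Finset.univ.filter
      (fun ij : Fin p × Fin p => ij.1 ≠ ij.2 ∧ Θstar ij.1 ij.2 ≠ 0) with hSSdef
  set a := ∑ ij ∈ SS, |Δ ij.1 ij.2| with hadef
  set b := ∑ ij ∈ Soff \ SS, |Δ ij.1 ij.2| with hbdef
  set d := ∑ i, |Δ i i| with hddef
  have hsub : SS ⊆ Soff := by
    intro ij hij
    rw [hSSdef, Finset.mem_filter] at hij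
    rw [hSoff, Finset.mem_filter]
    exact ⟨hij.1, hij.2.1⟩
  have hzero : ∀ ij ∈ Soff \ SS, Θstar ij.1 ij.2 = 0 := by
    intro ij hij
    rw [Finset.mem_sdiff, hSoff, hSSdef, Finset.mem_filter, Finset.mem_filter] at hij
    obtain ⟨⟨-, hne⟩, hns⟩ := hij
    by_contra hc
    exact hns ⟨Finset.mem_univ _, hne, hc⟩
  -- (5) offNorm bound
  have hoffle : offNorm Θstar - offNorm Θtil ≤ a - b := by
    have e1 : offNorm Θstar = ∑ ij ∈ SS, |Θstar ij.1 ij.2| := by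
      rw [show offNorm Θstar = ∑ ij ∈ Soff, |Θstar ij.1 ij.2| from rfl,
        ← Finset.sum_sdiff hsub, Finset.sum_eq_zero (fun ij hij => by
          rw [hzero ij hij, abs_zero]), zero_add]
    have e2 : offNorm Θtil = (∑ ij ∈ SS, |Θtil ij.1 ij.2|) + b := by
      rw [show offNorm Θtil = ∑ ij ∈ Soff, |Θtil ij.1 ij.2| from rfl,
        ← Finset.sum_sdiff hsub, hbdef, add_comm]
      congr 1
      refine Finset.sum_congr rfl fun ij hij => ?_
      rw [hΔdef, Matrix.sub_apply, hzero ij hij, sub_zero]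
    rw [e1, e2, hadef]
    have h3 : ∑ ij ∈ SS, |Θstar ij.1 ij.2| - ∑ ij ∈ SS, |Θtil ij.1 ij.2|
        ≤ ∑ ij ∈ SS, |Δ ij.1 ij.2| := by
      rw [← Finset.sum_sub_distrib]
      refine Finset.sum_le_sum fun ij _ => ?_
      calc |Θstar ij.1 ij.2| - |Θtil ij.1 ij.2|
          ≤ |Θstar ij.1 ij.2 - Θtil ij.1 ij.2| := abs_sub_abs_le_abs_sub _ _
        _ = |Δ ij.1 ij.2| := by rw [hΔdef, Matrix.sub_apply, abs_sub_comm]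
    linarith
  -- (6) l1 decomposition
  have hl1 : l1Norm Δ = a + b + d := by
    have h0 : l1Norm Δ = ∑ ij : Fin p × Fin p, |Δ ij.1 ij.2| := by
      simp [l1Norm, Fintype.sum_prod_type]
    have h1 : (∑ ij ∈ Soff, |Δ ij.1 ij.2|)
        + (∑ ij ∈ Finset.univ.filter (fun ij : Fin p × Fin p => ¬ ij.1 ≠ ij.2),
            |Δ ij.1 ij.2|)
        = ∑ ij : Fin p × Fin p, |Δ ij.1 ij.2| := by
      rw [hSoff]
      exact Finset.sum_filter_add_sum_filter_not _ _ _
    have h2 : (∑ ij ∈ Finset.univ.filter (fun ij : Fin p × Fin p => ¬ ij.1 ≠ ij.2),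
        |Δ ij.1 ij.2|) = d := by
      rw [Finset.sum_filter, Fintype.sum_prod_type, hddef]
      simp
    have h3 : (∑ ij ∈ Soff, |Δ ij.1 ij.2|) = b + a := by
      rw [hadef, hbdef]
      exact (Finset.sum_sdiff hsub).symm
    rw [h0, ← h1, h2, h3]
    ring
  have hl1nonneg : 0 ≤ l1Norm Δ := by
    rw [hl1, hadef, hbdef, hddef]
    have := Finset.sum_nonneg (fun ij (_ : ij ∈ SS) => abs_nonneg (Δ ij.1 ij.2))
    have := Finset.sum_nonneg (fun ij (_ : ij ∈ Soff \ SS) => abs_nonneg (Δ ij.1 ij.2))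
    have := Finset.sum_nonneg (fun i (_ : i ∈ (Finset.univ : Finset (Fin p))) =>
      abs_nonneg (Δ i i))
    linarith
  have hF0 : (0:ℝ) ≤ frobNorm Δ := Real.sqrt_nonneg _
  -- sample covariance matrices
  set Sigt := (1 / (h : ℝ)) • ∑ i, wtil i • Matrix.vecMulVec (x i) (x i) with hSigt
  set Sigs := (1 / (h : ℝ)) • ∑ i, wstar i • Matrix.vecMulVec (x i) (x i) with hSigs
  have hDmat : (1 / (h : ℝ)) • ∑ i, (wtil i - wstar i) • Matrix.vecMulVec (x i) (x i)
      = Sigt - Sigs := by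
    rw [hSigt, hSigs, ← smul_sub, ← Finset.sum_sub_distrib]
    congr 1
    exact Finset.sum_congr rfl fun i _ => sub_smul _ _ _
  rw [hDmat] at H3
  -- decomposition of the stationarity term
  have hdecomp : traceInner (Sigt - Θtil⁻¹) Δ
      = traceInner (Sigt - Sigs) Δ + traceInner (Sigs - Θstar⁻¹) Δ
        + traceInner (Θstar⁻¹ - Θtil⁻¹) Δ := by
    rw [← ConeAux.traceInner_add_left, ← ConeAux.traceInner_add_left]
    congr 1
    abel
  -- T1 ≥ 0 (monotonicity of the inverse map)
  have hT1 : 0 ≤ traceInner (Θstar⁻¹ - Θtil⁻¹) Δ := by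
    have hΔt : Δᵀ = Δ := ConeAux.transpose_eq (hΘtil.1.sub hΘstar.1)
    unfold traceInner
    rw [hΔt, hΔdef]
    exact ConeAux.trace_mono hΘstar hΘtil
  -- bounds from H4a
  have hlinf : linfNorm (Sigs - Θstar⁻¹) ≤ lam / 4 := by
    have := le_max_left (linfNorm (Sigs - Θstar⁻¹)) τ₂
    linarith
  have hτ₂' : τ₂ ≤ lam / 4 := by
    have := le_max_right (linfNorm (Sigs - Θstar⁻¹)) τ₂
    linarith
  -- T2 lower bound
  have hT2 : -(lam / 4 * l1Norm Δ) ≤ traceInner (Sigs - Θstar⁻¹) Δ := by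
    have habs := ConeAux.abs_traceInner_le hp (Sigs - Θstar⁻¹) Δ
    have hneg := neg_abs_le (traceInner (Sigs - Θstar⁻¹) Δ)
    have hmul := mul_le_mul_of_nonneg_right hlinf hl1nonneg
    linarith
  -- T3 lower bound
  have hT3 : -(τ₁ * frobNorm Δ + lam / 4 * l1Norm Δ) ≤ traceInner (Sigt - Sigs) Δ := by
    have hneg := neg_abs_le (traceInner (Sigt - Sigs) Δ)
    have hmul := mul_le_mul_of_nonneg_right hτ₂' hl1nonneg
    linarith
  -- combine
  have hH1' : traceInner (Sigt - Θtil⁻¹) Δ ≤ lam * (a - b) :=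
    H1.trans (mul_le_mul_of_nonneg_left hoffle hlam.le)
  have hkey : 0 ≤ lam * (a - b) + lam / 2 * (a + b + d) + τ₁ * frobNorm Δ := by
    rw [hl1] at hT2 hT3
    linarith
  have hfin : lam * b ≤ lam * (3 * a + d + 2 * τ₁ / lam * frobNorm Δ) := by
    have he : lam * (3 * a + d + 2 * τ₁ / lam * frobNorm Δ)
        = lam * (3 * a + d) + 2 * (τ₁ * frobNorm Δ) := by
      field_simp
    rw [he]
    nlinarith [hkey]
  exact le_of_mul_le_mul_left hfin hlam
end

section
/- Let N ≥ 1 and m ≥ 1 be integers, let v ∈ ℝ^N, and let S_1, …, S_q be pairwise disjoint subsets of {1,…,N} whose union is {1,…,N}, such that |S_j| = m for all 1 ≤ j ≤ q−1, |S_q| ≤ m, and for every 2 ≤ j ≤ q, every i ∈ S_j, and every i' ∈ S_{j−1}, |v_i| ≤ |v_{i'}|. Then Σ_{j=1}^q ‖v_{S_j}‖_2 ≤ ‖v‖_2 + ‖v‖_1/√m, where v_{S_j} denotes the vector obtained from v by setting to zero all coordinates outside S_j. (Block-peeling bound used in the proof of Corollary 1.) -/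
/-- Block-peeling bound used in the proof of Corollary 1: if the coordinates of v
are partitioned into blocks S_1, …, S_q of size m (the last possibly smaller),
ordered so that every entry of a block is no larger in absolute value than every
entry of the previous block, then Σ_j ‖v_{S_j}‖₂ ≤ ‖v‖₂ + ‖v‖₁/√m. -/
theorem block_peeling_bound (N m : ℕ) (hN : 1 ≤ N) (hm : 1 ≤ m)
    (v : Fin N → ℝ) (q : ℕ) (hq : 0 < q)
    (S : Fin q → Finset (Fin N))
    (hdisj : ∀ j j' : Fin q, j ≠ j' → Disjoint (S j) (S j'))
    (hunion : Finset.univ.biUnion S = (Finset.univ : Finset (Fin N)))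
    (hcard_eq : ∀ j : Fin q, (j : ℕ) + 1 < q → (S j).card = m)
    (hcard_le : ∀ j : Fin q, (S j).card ≤ m)
    (horder : ∀ j j' : Fin q, (j' : ℕ) + 1 = (j : ℕ) →
      ∀ i ∈ S j, ∀ i' ∈ S j', |v i| ≤ |v i'|) :
    (∑ j : Fin q, Real.sqrt (∑ i ∈ S j, (v i) ^ 2)) ≤
      Real.sqrt (∑ i, (v i) ^ 2) + (∑ i, |v i|) / Real.sqrt m := by
  obtain ⟨p, rfl⟩ : ∃ p, q = p + 1 := ⟨q - 1, (Nat.succ_pred_eq_of_pos hq).symm⟩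
  have hmR : (0:ℝ) < (m:ℝ) := by exact_mod_cast hm
  have hsm : (0:ℝ) < Real.sqrt m := Real.sqrt_pos.mpr hmR
  set A : Fin (p+1) → ℝ := fun j => ∑ i ∈ S j, |v i| with hA
  have hA_nonneg : ∀ j, 0 ≤ A j := fun j => Finset.sum_nonneg fun i _ => abs_nonneg _
  -- key claim: for j with j+1 < q, the (j+1)-th block's ℓ2 norm ≤ A j / √m
  have claim2 : ∀ (j : ℕ) (h : j + 1 < p + 1),
      Real.sqrt (∑ i ∈ S ⟨j+1, h⟩, (v i) ^ 2)
        ≤ A ⟨j, Nat.lt_of_succ_lt h⟩ / Real.sqrt m := by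
    intro j h
    set j0 : Fin (p+1) := ⟨j, Nat.lt_of_succ_lt h⟩ with hj0
    have hcard : (S j0).card = m := hcard_eq j0 h
    have hbound : ∀ i ∈ S ⟨j+1, h⟩, |v i| ≤ A j0 / m := by
      intro i hi
      rw [le_div_iff₀ hmR]
      have : (S j0).card • |v i| ≤ A j0 :=
        Finset.card_nsmul_le_sum _ _ _ (fun i' hi' => horder ⟨j+1,h⟩ j0 rfl i hi i' hi')
      rw [hcard, nsmul_eq_mul] at this
      linarith [this]
    have hsum : (∑ i ∈ S ⟨j+1, h⟩, (v i) ^ 2) ≤ (A j0)^2 / m := by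
      calc (∑ i ∈ S ⟨j+1, h⟩, (v i) ^ 2)
          ≤ ∑ i ∈ S ⟨j+1, h⟩, (A j0 / m)^2 := by
            apply Finset.sum_le_sum
            intro i hi
            rw [← sq_abs]
            exact pow_le_pow_left₀ (abs_nonneg _) (hbound i hi) 2
        _ = (S ⟨j+1, h⟩).card * (A j0 / m)^2 := by
            rw [Finset.sum_const, nsmul_eq_mul]
        _ ≤ m * (A j0 / m)^2 := by
            apply mul_le_mul_of_nonneg_right _ (sq_nonneg _)
            exact_mod_cast hcard_le ⟨j+1, h⟩
        _ = (A j0)^2 / m := by field_simp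
    calc Real.sqrt (∑ i ∈ S ⟨j+1, h⟩, (v i) ^ 2)
        ≤ Real.sqrt ((A j0)^2 / m) := Real.sqrt_le_sqrt hsum
      _ = A j0 / Real.sqrt m := by
          rw [Real.sqrt_div (sq_nonneg _), Real.sqrt_sq (hA_nonneg j0)]
  -- rewrite sum over Fin (p+1) as sum over range (p+1)
  set g : ℕ → ℝ := fun j => if h : j < p + 1 then Real.sqrt (∑ i ∈ S ⟨j, h⟩, (v i) ^ 2) else 0
    with hg
  have hsum_eq : (∑ j : Fin (p+1), Real.sqrt (∑ i ∈ S j, (v i) ^ 2))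
      = ∑ j ∈ Finset.range (p+1), g j := by
    rw [← Fin.sum_univ_eq_sum_range]
    apply Finset.sum_congr rfl
    intro j _
    simp only [hg, dif_pos j.isLt, Fin.eta]
  rw [hsum_eq, Finset.sum_range_succ']
  have h1 : g 0 ≤ Real.sqrt (∑ i, (v i) ^ 2) := by
    have h0 : (0:ℕ) < p + 1 := Nat.succ_pos p
    simp only [hg, dif_pos h0]
    apply Real.sqrt_le_sqrt
    exact Finset.sum_le_sum_of_subset_of_nonneg (Finset.subset_univ _)
      (fun i _ _ => sq_nonneg _)
  have h2 : (∑ j ∈ Finset.range p, g (j+1)) ≤ (∑ i, |v i|) / Real.sqrt m := by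
    calc (∑ j ∈ Finset.range p, g (j+1))
        ≤ ∑ j ∈ Finset.range p,
            (if h : j < p + 1 then A ⟨j, h⟩ else 0) / Real.sqrt m := by
          apply Finset.sum_le_sum
          intro j hj
          have hjp : j < p + 1 := Nat.lt_succ_of_lt (Finset.mem_range.mp hj)
          rw [dif_pos hjp]
          have hjp1 : j + 1 < p + 1 := Nat.succ_lt_succ (Finset.mem_range.mp hj)
          have := claim2 j hjp1
          simpa [hg, dif_pos hjp1, Finset.mem_range.mp hj] using this
      _ = (∑ j ∈ Finset.range p, (if h : j < p + 1 then A ⟨j, h⟩ else 0)) / Real.sqrt m := by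
          rw [Finset.sum_div]
      _ ≤ (∑ j ∈ Finset.range (p+1), (if h : j < p + 1 then A ⟨j, h⟩ else 0)) / Real.sqrt m := by
          apply div_le_div_of_nonneg_right ?_ hsm.le
          apply Finset.sum_le_sum_of_subset_of_nonneg
            (Finset.range_mono (Nat.le_succ p))
          intro j _ _
          split
          · exact hA_nonneg _
          · exact le_refl 0
      _ = (∑ j : Fin (p+1), A j) / Real.sqrt m := by
          rw [← Fin.sum_univ_eq_sum_range (fun j => if h : j < p + 1 then A ⟨j, h⟩ else 0)]
          congr 1
          apply Finset.sum_congr rfl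
          intro j _
          simp [j.isLt]
      _ = (∑ i, |v i|) / Real.sqrt m := by
          congr 1
          rw [hA]
          rw [← Finset.sum_biUnion (fun j _ j' _ hne => hdisj j j' hne), hunion]
  linarith [h1, h2]
end
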